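/- Let E be a metrizable, noncompact, locally compact Hausdorff topological space with a countable base, and let D_E be the space of E-valued RCLL paths on [0,∞) with the σ-algebra generated by the coordinate maps X_t(ω)=ω(t). There exists a measurable functional L : D_E → E such that (1) L(ω) = lim_{t→∞} X_t(ω) whenever this limit exists in E, and (2) L(θ_t(ω)) = L(ω) for all ω∈D_E and all t≥0, where θ_t(ω)=ω(t+·) is the shift operator. -/

import Mathlib

open MeasureTheory Filter Set Topology
open scoped NNReal ENNReal

noncomputable section

/-- A function `f : [0,∞) → E` is RCLL (càdlàg) if it is everywhere right-continuous
and has left limits at every `t > 0`. -/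
def IsCadlag {E : Type*} [TopologicalSpace E] (f : ℝ≥0 → E) : Prop :=
  (∀ t : ℝ≥0, ContinuousWithinAt f (Set.Ici t) t) ∧
    (∀ t : ℝ≥0, 0 < t → ∃ l : E, Filter.Tendsto f (nhdsWithin t (Set.Iio t)) (nhds l))

/-- The space `D_E` of `E`-valued RCLL paths on `[0,∞)`. -/
structure Cadlag (E : Type*) [TopologicalSpace E] where
  toFun : ℝ≥0 → E
  isCadlag : IsCadlag toFun

namespace Cadlag

variable {E : Type*} [TopologicalSpace E]

/-- The σ-algebra on `D_E` generated by the coordinate maps `ω ↦ ω(t)`. -/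
instance instMeasurableSpace [MeasurableSpace E] : MeasurableSpace (Cadlag E) :=
  ⨆ t : ℝ≥0, MeasurableSpace.comap (fun ω => ω.toFun t) inferInstance

/-- The shift operator `θ_t`. -/
def shift (t : ℝ≥0) (ω : Cadlag E) : Cadlag E :=
  ⟨fun s => ω.toFun (t + s), by
    constructor
    · intro s
      exact (ω.isCadlag.1 (t + s)).comp
        ((continuous_const.add continuous_id).continuousWithinAt)
        (fun x hx => Set.mem_Ici.mpr (add_le_add le_rfl (Set.mem_Ici.mp hx)))
    · intro s hs
      obtain ⟨l, hl⟩ := ω.isCadlag.2 (t + s) (lt_of_lt_of_le hs le_add_self)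
      refine ⟨l, hl.comp ?_⟩
      apply tendsto_nhdsWithin_of_tendsto_nhds_of_eventually_within
      · exact ((continuous_const.add continuous_id).continuousAt).mono_left nhdsWithin_le_nhds
      · filter_upwards [self_mem_nhdsWithin] with u hu
        exact Set.mem_Iio.mpr (add_lt_add_of_le_of_lt le_rfl (Set.mem_Iio.mp hu))⟩

end Cadlag

lemma mapAddAtTop (t : ℝ≥0) : Filter.map (fun s : ℝ≥0 => t + s) atTop = atTop := by
  apply le_antisymm
  · exact tendsto_atTop_mono (fun s => le_add_self) tendsto_id
  · have h1 : Tendsto (fun s : ℝ≥0 => s - t) atTop atTop := by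
      refine tendsto_atTop.2 fun b => ?_
      filter_upwards [eventually_ge_atTop (b + t)] with s hs
      exact le_tsub_of_add_le_right hs
    have h2 : (fun s : ℝ≥0 => t + (s - t)) =ᶠ[atTop] id := by
      filter_upwards [eventually_ge_atTop t] with s hs
      simpa using add_tsub_cancel_of_le hs
    calc atTop = Filter.map id atTop := Filter.map_id.symm
    _ = Filter.map (fun s : ℝ≥0 => t + (s - t)) atTop := (Filter.map_congr h2).symm
    _ = Filter.map (fun s : ℝ≥0 => t + s) (Filter.map (fun s => s - t) atTop) := by
        rw [Filter.map_map]; rfl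
    _ ≤ Filter.map (fun s : ℝ≥0 => t + s) atTop := Filter.map_mono h1

lemma limsupShift (u : ℝ≥0 → ℝ≥0∞) (t : ℝ≥0) :
    Filter.limsup (fun s => u (t + s)) atTop = Filter.limsup u atTop := by
  have : (fun s : ℝ≥0 => u (t + s)) = u ∘ (fun s => t + s) := rfl
  rw [this, Filter.limsup_comp, mapAddAtTop]

lemma limsupCountable (v : ℝ≥0 → ℝ≥0∞)
    (hv : ∀ s : ℝ≥0, ContinuousWithinAt v (Set.Ici s) s) :
    Filter.limsup v Filter.atTop
      = ⨅ n : ℕ, ⨆ r : ℚ, ⨆ _ : (n : ℝ≥0) ≤ Real.toNNReal r, v (Real.toNNReal r) := by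
  have key : ∀ (s : ℝ≥0) (n : ℕ), (n : ℝ≥0) ≤ s →
      v s ≤ ⨆ r : ℚ, ⨆ _ : (n : ℝ≥0) ≤ Real.toNNReal r, v (Real.toNNReal r) := by
    intro s n hns
    have hq : ∀ j : ℕ, ∃ r : ℚ, (s : ℝ) < r ∧ (r : ℝ) < (s : ℝ) + 1 / (j + 1) := by
      intro j
      exact exists_rat_btwn (lt_add_of_pos_right _ (by positivity))
    choose r hr1 hr2 using hq
    have hrpos : ∀ j, (0:ℝ) ≤ r j := fun j => le_of_lt (lt_of_le_of_lt s.coe_nonneg (hr1 j))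
    set q : ℕ → ℝ≥0 := fun j => Real.toNNReal (r j) with hqdef
    have hsq : ∀ j, s ≤ q j := by
      intro j
      rw [← Real.toNNReal_coe (r := s)]
      exact Real.toNNReal_mono (le_of_lt (hr1 j))
    have hcoe : ∀ j, (q j : ℝ) = r j := fun j => Real.coe_toNNReal _ (hrpos j)
    have hupper : Tendsto (fun j : ℕ => (s : ℝ) + 1 / (j + 1)) atTop (𝓝 (s : ℝ)) := by
      have := tendsto_one_div_add_atTop_nhds_zero_nat (𝕜 := ℝ)
      simpa using tendsto_const_nhds.add this
    have hco : Tendsto (fun j => (q j : ℝ)) atTop (𝓝 (s : ℝ)) := by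
      refine tendsto_of_tendsto_of_tendsto_of_le_of_le tendsto_const_nhds hupper ?_ ?_
      · intro j; simp only []; rw [hcoe j]; exact le_of_lt (hr1 j)
      · intro j; simp only []; rw [hcoe j]; exact le_of_lt (hr2 j)
    have hqt : Tendsto q atTop (𝓝 s) := NNReal.tendsto_coe.1 hco
    have hqt' : Tendsto q atTop (nhdsWithin s (Set.Ici s)) :=
      tendsto_nhdsWithin_of_tendsto_nhds_of_eventually_within _ hqt
        (Eventually.of_forall fun j => hsq j)
    have hvq : Tendsto (fun j => v (q j)) atTop (𝓝 (v s)) := (hv s).tendsto.comp hqt'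
    refine le_of_tendsto hvq (Eventually.of_forall fun j => ?_)
    exact le_iSup₂ (f := fun (r : ℚ) (_ : (n : ℝ≥0) ≤ Real.toNNReal r) => v (Real.toNNReal r))
      (r j) (hns.trans (hsq j))
  apply le_antisymm
  · refine le_iInf fun n => ?_
    refine Filter.limsup_le_of_le (by isBoundedDefault) ?_
    filter_upwards [eventually_ge_atTop (n : ℝ≥0)] with s hs using key s n hs
  · rw [Filter.limsup_eq]
    refine le_sInf fun a ha => ?_
    simp only [Set.mem_setOf_eq, eventually_atTop] at ha
    obtain ⟨t0, ht0⟩ := ha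
    obtain ⟨n, hn⟩ := exists_nat_ge t0
    refine iInf_le_of_le n (iSup_le fun r => iSup_le fun hr => ht0 _ (hn.trans hr))


lemma measurable_coordCadlag {E : Type*} [TopologicalSpace E] [MeasurableSpace E] (t : ℝ≥0) :
    Measurable fun ω : Cadlag E => ω.toFun t :=
  MeasurableSpace.comap_le_iff_le_map.1
    (le_iSup (fun t : ℝ≥0 => MeasurableSpace.comap (fun ω : Cadlag E => ω.toFun t) inferInstance) t)

/-- **A measurable shift-invariant "limit" functional.** Let `E` be a metrizable,
noncompact, locally compact Hausdorff topological space with a countable base, and `D_E`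
the space of `E`-valued RCLL paths with the σ-algebra generated by the coordinate maps.
There is a measurable functional `L : D_E → E` such that (1) `L(ω) = lim_{t→∞} X_t(ω)`
whenever this limit exists in `E`, and (2) `L(θ_t(ω)) = L(ω)` for all `ω ∈ D_E`, `t ≥ 0`. -/
theorem statement14 {E : Type*} [TopologicalSpace E] [T2Space E]
    [LocallyCompactSpace E] [SecondCountableTopology E]
    [TopologicalSpace.MetrizableSpace E] [NoncompactSpace E] [Nonempty E]
    [MeasurableSpace E] [BorelSpace E] :
    ∃ L : Cadlag E → E, Measurable L ∧
      (∀ (ω : Cadlag E) (l : E), Filter.Tendsto ω.toFun Filter.atTop (nhds l) → L ω = l) ∧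
      (∀ (ω : Cadlag E) (t : ℝ≥0), L (Cadlag.shift t ω) = L ω) := by
  letI : MetricSpace E := TopologicalSpace.metrizableSpaceMetric E
  obtain ⟨u, hu⟩ := TopologicalSpace.exists_dense_seq E
  set e : E → (ℕ → ℝ≥0∞) := fun x k => edist x (u k) with he
  have econt : Continuous e := continuous_pi fun k => continuous_id.edist continuous_const
  have einj : Function.Injective e := by
    intro a b hab
    have hd : ∀ k, dist a (u k) = dist b (u k) := by
      intro k
      have := congrFun hab k
      simp only [he] at this
      rw [dist_edist, dist_edist, this]
    refine eq_of_forall_dist_le fun ε hε => ?_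
    obtain ⟨k, hk⟩ := Metric.denseRange_iff.1 hu a (ε / 2) (by positivity)
    calc dist a b ≤ dist a (u k) + dist (u k) b := dist_triangle _ _ _
    _ = dist a (u k) + dist a (u k) := by rw [dist_comm (u k) b, hd k]
    _ ≤ ε / 2 + ε / 2 := add_le_add hk.le hk.le
    _ = ε := by ring
  have himg : ∀ s : Set E, MeasurableSet s → MeasurableSet (e '' s) := by
    intro s hs
    have hcov : e '' s = ⋃ n, e '' (s ∩ compactCovering E n) := by
      rw [← Set.image_iUnion, ← Set.inter_iUnion, iUnion_compactCovering, Set.inter_univ]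
    rw [hcov]
    refine MeasurableSet.iUnion fun n => ?_
    haveI : CompactSpace (compactCovering E n) :=
      isCompact_iff_compactSpace.1 (isCompact_compactCovering E n)
    have hfe : Topology.IsClosedEmbedding (fun x : compactCovering E n => e x) :=
      (econt.comp continuous_subtype_val).isClosedEmbedding
        (einj.comp Subtype.val_injective)
    have him : e '' (s ∩ compactCovering E n)
        = (fun x : compactCovering E n => e x) '' (Subtype.val ⁻¹' s) := by
      rw [show (fun x : compactCovering E n => e x) = e ∘ Subtype.val from rfl,
        Set.image_comp, Subtype.image_preimage_coe, Set.inter_comm]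
    rw [him]
    exact hfe.measurableEmbedding.measurableSet_image' (measurable_subtype_coe hs)
  have me : MeasurableEmbedding e := ⟨einj, econt.measurable, himg⟩
  obtain ⟨r, hr, hre⟩ := me.exists_measurable_extend (measurable_id (α := E))
    (fun _ => ⟨Classical.arbitrary E⟩)
  set F : Cadlag E → ℕ → ℝ≥0∞ := fun ω k =>
    Filter.limsup (fun t : ℝ≥0 => edist (ω.toFun t) (u k)) Filter.atTop with hF
  have hFshift : ∀ (ω : Cadlag E) (t : ℝ≥0), F (Cadlag.shift t ω) = F ω := by
    intro ω t
    funext k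
    exact limsupShift (fun s => edist (ω.toFun s) (u k)) t
  have hFmeas : Measurable F := by
    refine measurable_pi_lambda _ fun k => ?_
    have hrw : ∀ ω : Cadlag E, F ω k = ⨅ n : ℕ, ⨆ q : ℚ,
        ⨆ _ : (n : ℝ≥0) ≤ Real.toNNReal q, edist (ω.toFun (Real.toNNReal q)) (u k) := by
      intro ω
      exact limsupCountable _ fun s =>
        ((continuous_id.edist continuous_const).continuousAt).comp_continuousWithinAt
          (ω.isCadlag.1 s)
    simp only [hrw]
    refine Measurable.iInf fun n => Measurable.iSup fun q => Measurable.iSup_Prop _ ?_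
    exact (measurable_id.edist measurable_const).comp (measurable_coordCadlag _)
  refine ⟨fun ω => r (F ω), hr.comp hFmeas, ?_, ?_⟩
  · intro ω l hl
    have hFl : F ω = e l := by
      funext k
      have : Tendsto (fun t : ℝ≥0 => edist (ω.toFun t) (u k)) atTop (𝓝 (edist l (u k))) :=
        Filter.Tendsto.comp ((continuous_id.edist continuous_const).tendsto l) hl
      exact this.limsup_eq
    show r (F ω) = l
    rw [hFl]
    exact congrFun hre l
  · intro ω t
    show r (F (Cadlag.shift t ω)) = r (F ω)
    rw [hFshift ω t]

end
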